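/- arXiv:1905.03067 — 5 statements merged into one kernel-verified Lean document; each statement's English description precedes it below -/
import Mathlib

section
/- Let L be a finitely generated free R-module of rank n with a σ-sesquilinear form B : L × L → R (additive in each argument, with B(r·x, y) = σ(r)·B(x,y) and B(x, r·y) = r·B(x,y) for all r ∈ R). Suppose (B₁,…,Bₙ) is an R-basis of L, k is a nonzero integer, and c_{ij} are integers (1 ≤ i,j ≤ n) such that B(Bᵢ,Bᵢ) = 1 + c_{ii}·q^k for all i, and B(Bᵢ,Bⱼ) = B(Bⱼ,Bᵢ) = c_{ij}·q^k for all i ≠ j. Then every x ∈ L with B(x,x) = 1 + c·q^k for some integer c satisfies x = q^m·Bᵢ or x = −q^m·Bᵢ for some index i and some m ∈ ℤ; in particular, x is a unit multiple of one of the basis vectors, so such a basis is unique up to permutation and multiplication by units. -/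
open LaurentPolynomial

section aux
variable (σ : LaurentPolynomial ℤ →+* LaurentPolynomial ℤ) (hσ : σ (T 1) = T (-1))
include hσ

lemma sigmaTnegone : σ (T (-1)) = T 1 := by
  have h : σ (T (-1)) * T (-1) = 1 := by
    have h2 : (T (-1) : LaurentPolynomial ℤ) * T 1 = 1 := by rw [← T_add]; norm_num
    have h3 := map_mul σ (T (-1)) (T 1)
    rw [h2, map_one, hσ] at h3
    exact h3.symm
  have h2 : (T (-1) : LaurentPolynomial ℤ) * T 1 = 1 := by
    rw [← T_add]; norm_num
  calc σ (T (-1)) = σ (T (-1)) * (T (-1) * T 1) := by rw [h2, mul_one]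
    _ = (σ (T (-1)) * T (-1)) * T 1 := by ring
    _ = T 1 := by rw [h, one_mul]

lemma sigmaT : ∀ m : ℤ, σ (T m) = T (-m) := by
  intro m
  induction m using Int.induction_on with
  | zero => simp
  | succ n ih =>
      rw [T_add, map_mul, ih, hσ, ← T_add]
      congr 1
      ring
  | pred n ih =>
      rw [show (-(n:ℤ) - 1) = (-n) + (-1) by ring, T_add, map_mul, ih, sigmaTnegone σ hσ,
        ← T_add]
      congr 1
      ring

lemma sigma_eq : σ = ((AddMonoidAlgebra.domCongr ℤ ℤ (AddEquiv.neg ℤ)) :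
    LaurentPolynomial ℤ ≃ₐ[ℤ] LaurentPolynomial ℤ) := by
  apply AddMonoidAlgebra.ringHom_ext
  · intro b
    have hs : AddMonoidAlgebra.single (0:ℤ) b = ((b : ℤ) : LaurentPolynomial ℤ) := by
      rw [show AddMonoidAlgebra.single (0:ℤ) b = (AddMonoidAlgebra.single (0:ℤ) b : LaurentPolynomial ℤ) from rfl,
        single_eq_C_mul_T, T_zero, mul_one, eq_intCast]
    rw [hs, map_intCast, map_intCast]
  · intro a
    have : AddMonoidAlgebra.single a (1:ℤ) = (T a : LaurentPolynomial ℤ) := rfl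
    rw [this]
    rw [sigmaT σ hσ]
    show _ = (AddMonoidAlgebra.domCongr ℤ ℤ (AddEquiv.neg ℤ)) (AddMonoidAlgebra.single a 1)
    rw [AddMonoidAlgebra.domCongr_single]
    rfl

lemma sigma_apply (p : LaurentPolynomial ℤ) (m : ℤ) : (σ p).coeff m = p.coeff (-m) := by
  rw [sigma_eq σ hσ]
  show (AddMonoidAlgebra.domCongr ℤ ℤ (AddEquiv.neg ℤ) p).coeff m = p.coeff (-m)
  rw [AddMonoidAlgebra.coeff_domCongr]
  rfl

lemma sigma_sigma (p : LaurentPolynomial ℤ) : σ (σ p) = p := by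
  apply AddMonoidAlgebra.ext
  apply Finsupp.ext
  intro m
  rw [sigma_apply σ hσ, sigma_apply σ hσ, neg_neg]

lemma coeff_zero_bar_mul (p : LaurentPolynomial ℤ) :
    (σ p * p).coeff 0 = ∑ a ∈ (σ p).coeff.support, ((σ p).coeff a) ^ 2 := by
  rw [AddMonoidAlgebra.coeff_mul]
  rw [Finsupp.sum]
  apply Finset.sum_congr rfl
  intro a ha
  have hfun : (fun c (d : ℤ) => if a + c = 0 then (σ p).coeff a * d else 0)
      = (fun c (d : ℤ) => if c = -a then (σ p).coeff a * d else 0) := by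
    funext c d
    congr 1
    · simp only [eq_iff_iff]; omega
  rw [show (Finsupp.sum p.coeff fun a₂ b₂ => if a + a₂ = 0 then (σ p).coeff a * b₂ else 0)
      = Finsupp.sum p.coeff fun c d => if c = -a then (σ p).coeff a * d else 0 by rw [hfun]]
  rw [Finsupp.sum_ite_eq']
  by_cases h : -a ∈ p.coeff.support
  · rw [if_pos h, ← sigma_apply σ hσ p a, sq]
  · rw [if_neg h]
    have h0 : p.coeff (-a) = 0 := Finsupp.notMem_support_iff.mp h
    rw [← sigma_apply σ hσ p a] at h0
    rw [h0]
    ring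

lemma Q_nonneg (p : LaurentPolynomial ℤ) : 0 ≤ (σ p * p).coeff 0 := by
  rw [coeff_zero_bar_mul σ hσ]
  exact Finset.sum_nonneg fun a _ => sq_nonneg _

lemma Q_eq_zero (p : LaurentPolynomial ℤ) (h : (σ p * p).coeff 0 = 0) : p = 0 := by
  rw [coeff_zero_bar_mul σ hσ] at h
  have hall := (Finset.sum_eq_zero_iff_of_nonneg (fun a _ => sq_nonneg ((σ p).coeff a))).mp h
  have hs : σ p = 0 := by
    ext a
    by_cases ha : a ∈ (σ p).coeff.support
    · have := hall a ha
      have := sq_eq_zero_iff.mp this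
      simpa using this
    · simpa using Finsupp.notMem_support_iff.mp ha
  rw [← sigma_sigma σ hσ p, hs, map_zero]

lemma Q_eq_one (p : LaurentPolynomial ℤ) (h : (σ p * p).coeff 0 = 1) :
    ∃ m : ℤ, p = T m ∨ p = -T m := by
  rw [coeff_zero_bar_mul σ hσ] at h
  have hge : ∀ a ∈ (σ p).coeff.support, 1 ≤ ((σ p).coeff a) ^ 2 := by
    intro a ha
    have h1 : (σ p).coeff a ≠ 0 := Finsupp.mem_support_iff.mp ha
    have := sq_pos_of_ne_zero h1
    omega
  have hcard : (σ p).coeff.support.card ≤ 1 := by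
    have := Finset.card_nsmul_le_sum (σ p).coeff.support (fun a => ((σ p).coeff a) ^ 2) 1 hge
    simpa [h] using this
  have hne : (σ p).coeff.support.Nonempty := by
    by_contra hc
    rw [Finset.not_nonempty_iff_eq_empty] at hc
    rw [hc, Finset.sum_empty] at h
    exact one_ne_zero h.symm
  have hcard1 : (σ p).coeff.support.card = 1 := le_antisymm hcard (Finset.one_le_card.mpr hne)
  obtain ⟨a₀, ha₀⟩ := Finset.card_eq_one.mp hcard1
  have hsingle : σ p = AddMonoidAlgebra.single a₀ ((σ p).coeff a₀) :=
    AddMonoidAlgebra.ext ((Finsupp.support_eq_singleton).mp ha₀).2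
  rw [ha₀, Finset.sum_singleton] at h
  have hv : (σ p).coeff a₀ = 1 ∨ (σ p).coeff a₀ = -1 := by
    rw [sq] at h
    exact Int.eq_one_or_neg_one_of_mul_eq_one h
  rcases hv with hv | hv
  · refine ⟨-a₀, Or.inl ?_⟩
    rw [← sigma_sigma σ hσ p, hsingle, hv]
    exact sigmaT σ hσ a₀
  · refine ⟨-a₀, Or.inr ?_⟩
    rw [← sigma_sigma σ hσ p, hsingle, hv]
    have : (AddMonoidAlgebra.single a₀ (-1 : ℤ) : LaurentPolynomial ℤ) = -T a₀ := by
      rw [show (T a₀ : LaurentPolynomial ℤ) = AddMonoidAlgebra.single a₀ 1 from rfl,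
        ← AddMonoidAlgebra.single_neg]
    rw [this, map_neg, sigmaT σ hσ a₀]

end aux

/-- rigidity lemma for `q`-lattices.  Let `L` be a finitely generated
free module over `R = ℤ[q,q⁻¹]` of rank `n`, with a `σ`-sesquilinear form `B` (where `σ`
is the bar involution, the ring homomorphism determined by `σ(q) = q⁻¹`).  Suppose
`(b₁,…,bₙ)` is an `R`-basis, `k` is a nonzero integer and `c i j` are integers with
`B(bᵢ,bᵢ) = 1 + c i i · q^k` and `B(bᵢ,bⱼ) = B(bⱼ,bᵢ) = c i j · q^k` for `i ≠ j`.
Then every `x ∈ L` with `B(x,x) = 1 + c·q^k` for some integer `c` is of the form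
`± q^m · bᵢ`. -/
theorem stmt1 (n : ℕ)
    (σ : LaurentPolynomial ℤ →+* LaurentPolynomial ℤ)
    (hσ : σ (T 1) = T (-1))
    (L : Type) [AddCommGroup L] [Module (LaurentPolynomial ℤ) L]
    (B : L → L → LaurentPolynomial ℤ)
    (hBaddl : ∀ x x' y, B (x + x') y = B x y + B x' y)
    (hBaddr : ∀ x y y', B x (y + y') = B x y + B x y')
    (hBsmull : ∀ (r : LaurentPolynomial ℤ) (x y), B (r • x) y = σ r * B x y)
    (hBsmulr : ∀ (r : LaurentPolynomial ℤ) (x y), B x (r • y) = r * B x y)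
    (b : Module.Basis (Fin n) (LaurentPolynomial ℤ) L)
    (k : ℤ) (hk : k ≠ 0) (c : Fin n → Fin n → ℤ)
    (hdiag : ∀ i, B (b i) (b i) = 1 + (c i i : LaurentPolynomial ℤ) * T k)
    (hoff : ∀ i j, i ≠ j →
      B (b i) (b j) = (c i j : LaurentPolynomial ℤ) * T k ∧
      B (b j) (b i) = (c i j : LaurentPolynomial ℤ) * T k)
    (x : L) (cx : ℤ)
    (hx : B x x = 1 + (cx : LaurentPolynomial ℤ) * T k) :
    ∃ (i : Fin n) (m : ℤ), x = (T m : LaurentPolynomial ℤ) • b i ∨ x = -((T m : LaurentPolynomial ℤ) • b i) := by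
  classical
  set r : Fin n → LaurentPolynomial ℤ := fun i => b.repr x i with hrdef
  have hrepr : ∑ i, r i • b i = x := b.sum_repr x
  have hsuml : ∀ (g : Fin n → L) (y : L), B (∑ i, g i) y = ∑ i, B (g i) y := fun g y =>
    map_sum (AddMonoidHom.mk' (fun z => B z y) (fun a a' => hBaddl a a' y)) g Finset.univ
  have hsumr : ∀ (x' : L) (g : Fin n → L), B x' (∑ i, g i) = ∑ i, B x' (g i) := fun x' g =>
    map_sum (AddMonoidHom.mk' (fun z => B x' z) (fun a a' => hBaddr x' a a')) g Finset.univ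
  have hTk0 : (T k : LaurentPolynomial ℤ) ≠ 0 := by
    intro h
    have h1 : (T k : LaurentPolynomial ℤ).coeff k = 1 := by simp
    rw [h] at h1
    simp at h1
  have hTkne : (T k : LaurentPolynomial ℤ) ≠ T (-k) := by
    intro h
    have h1 : (T k : LaurentPolynomial ℤ).coeff k = (T (-k) : LaurentPolynomial ℤ).coeff k := by rw [h]
    rw [T_apply, T_apply, if_pos rfl, if_neg (by omega)] at h1
    exact one_ne_zero h1
  have hBij : ∀ i j, B (b i) (b j)
      = (if i = j then 1 else 0) + (c i j : LaurentPolynomial ℤ) * T k := by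
    intro i j
    by_cases hij : i = j
    · subst hij; rw [if_pos rfl]; exact hdiag i
    · rw [if_neg hij, zero_add]; exact (hoff i j hij).1
  have hBxx : B x x = ∑ i, σ (r i) * (∑ j, r j * B (b i) (b j)) := by
    conv_lhs => rw [← hrepr]
    rw [hsuml]
    apply Finset.sum_congr rfl
    intro i _
    rw [hBsmull]
    congr 1
    rw [hsumr]
    apply Finset.sum_congr rfl
    intro j _
    exact hBsmulr (r j) (b i) (b j)
  set S : LaurentPolynomial ℤ := ∑ i, σ (r i) * r i with hSdef
  set P : LaurentPolynomial ℤ := ∑ i, ∑ j, (c i j : LaurentPolynomial ℤ) * (σ (r i) * r j)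
    with hPdef
  have hexp : B x x = S + T k * P := by
    rw [hBxx, hSdef, hPdef, Finset.mul_sum, ← Finset.sum_add_distrib]
    apply Finset.sum_congr rfl
    intro i _
    rw [show σ (r i) * r i = ∑ j, (if i = j then σ (r i) * r j else 0) by
        rw [Finset.sum_ite_eq]; simp, Finset.mul_sum, Finset.mul_sum, ← Finset.sum_add_distrib]
    apply Finset.sum_congr rfl
    intro j _
    rw [hBij i j]
    by_cases hij : i = j
    · subst hij; rw [if_pos rfl, if_pos rfl]; ring
    · rw [if_neg hij, if_neg hij]; ring
  have key : S + T k * P = 1 + (cx : LaurentPolynomial ℤ) * T k := by rw [← hexp, hx]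
  have hσS : σ S = S := by
    rw [hSdef, map_sum]
    apply Finset.sum_congr rfl
    intro i _
    rw [map_mul, sigma_sigma σ hσ]
    ring
  have csymm : ∀ i j, (c i j : LaurentPolynomial ℤ) = (c j i : LaurentPolynomial ℤ) := by
    intro i j
    by_cases hij : i = j
    · rw [hij]
    · have h1 := (hoff i j hij).1
      have h2 := (hoff j i (Ne.symm hij)).2
      exact mul_right_cancel₀ hTk0 (h1.symm.trans h2)
  have hσP : σ P = P := by
    rw [hPdef, map_sum]
    rw [show (∑ i, σ (∑ j, (c i j : LaurentPolynomial ℤ) * (σ (r i) * r j)))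
        = ∑ i, ∑ j, (c i j : LaurentPolynomial ℤ) * (r i * σ (r j)) by
      apply Finset.sum_congr rfl
      intro i _
      rw [map_sum]
      apply Finset.sum_congr rfl
      intro j _
      rw [map_mul, map_mul, map_intCast, sigma_sigma σ hσ]]
    rw [Finset.sum_comm]
    apply Finset.sum_congr rfl
    intro j _
    apply Finset.sum_congr rfl
    intro i _
    rw [csymm i j]
    ring
  have key2 : S + T (-k) * P = 1 + (cx : LaurentPolynomial ℤ) * T (-k) := by
    have h := congrArg σ key
    rw [map_add, map_mul, hσS, hσP, sigmaT σ hσ, map_add, map_one, map_mul, map_intCast,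
      sigmaT σ hσ] at h
    exact h
  have hPc : P = (cx : LaurentPolynomial ℤ) := by
    have h3 : ((T k : LaurentPolynomial ℤ) - T (-k)) * (P - (cx : LaurentPolynomial ℤ)) = 0 := by
      linear_combination key - key2
    rcases mul_eq_zero.mp h3 with h | h
    · exact absurd (sub_eq_zero.mp h) hTkne
    · exact sub_eq_zero.mp h
  have hS1 : S = 1 := by
    have h := key
    rw [hPc] at h
    linear_combination h
  have hone : ((1 : LaurentPolynomial ℤ)).coeff (0:ℤ) = 1 := by
    rw [AddMonoidAlgebra.one_def]
    exact Finsupp.single_eq_same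
  have hQsum : ∑ i, ((σ (r i) * r i : LaurentPolynomial ℤ)).coeff (0:ℤ) = 1 := by
    rw [show (∑ i, ((σ (r i) * r i : LaurentPolynomial ℤ)).coeff (0:ℤ))
        = (∑ i, (σ (r i) * r i : LaurentPolynomial ℤ)).coeff (0:ℤ) by
      rw [AddMonoidAlgebra.coeff_sum, Finsupp.finset_sum_apply], ← hSdef, hS1, hone]
  set Q : Fin n → ℤ := fun i => ((σ (r i) * r i : LaurentPolynomial ℤ)).coeff (0:ℤ) with hQdef
  have hQnn : ∀ i, 0 ≤ Q i := fun i => Q_nonneg σ hσ (r i)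
  have hex : ∃ i, Q i ≠ 0 := by
    by_contra hc
    push_neg at hc
    rw [Finset.sum_congr rfl (fun i _ => hc i), Finset.sum_const, smul_zero] at hQsum
    exact one_ne_zero hQsum.symm
  obtain ⟨i₀, hi₀⟩ := hex
  have h1le : 1 ≤ Q i₀ := lt_of_le_of_ne (hQnn i₀) (Ne.symm hi₀)
  have hrest : ∑ i ∈ Finset.univ.erase i₀, Q i + Q i₀ = 1 := by
    rw [Finset.sum_erase_add _ _ (Finset.mem_univ i₀)]
    exact hQsum
  have hrest_nn : 0 ≤ ∑ i ∈ Finset.univ.erase i₀, Q i :=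
    Finset.sum_nonneg fun i _ => hQnn i
  have hQ1 : Q i₀ = 1 := by omega
  have hrest0 : ∑ i ∈ Finset.univ.erase i₀, Q i = 0 := by omega
  have hrj : ∀ j, j ≠ i₀ → r j = 0 := by
    intro j hj
    apply Q_eq_zero σ hσ (r j)
    have := (Finset.sum_eq_zero_iff_of_nonneg (fun i _ => hQnn i)).mp hrest0 j
      (Finset.mem_erase.mpr ⟨hj, Finset.mem_univ j⟩)
    exact this
  obtain ⟨m, hm⟩ := Q_eq_one σ hσ (r i₀) hQ1
  refine ⟨i₀, m, ?_⟩
  have hxval : x = r i₀ • b i₀ := by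
    rw [← hrepr]
    rw [Finset.sum_eq_single i₀]
    · intro j _ hj
      rw [hrj j hj, zero_smul]
    · intro h
      exact absurd (Finset.mem_univ i₀) h
  rcases hm with hm | hm
  · left; rw [hxval, hm]
  · right; rw [hxval, hm, neg_smul]
end

section
/- Let α₁,…,αₙ ∈ R satisfy ∑ᵢ σ(αᵢ)·αᵢ = 1. Then there is exactly one index i with αᵢ ≠ 0, and for this index αᵢ = q^m or αᵢ = −q^m for some m ∈ ℤ. -/
open LaurentPolynomial

private lemma sigma_T_neg_one (σ : LaurentPolynomial ℤ →+* LaurentPolynomial ℤ)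
    (hσ : σ (T 1) = T (-1)) : σ (T (-1)) = T 1 := by
  have h1 : σ (T (-1)) * T (-1) = 1 := by
    have h2 : σ (T (-1) * T 1) = 1 := by
      rw [show (T (-1) * T 1 : LaurentPolynomial ℤ) = 1 by rw [← T_add]; norm_num, map_one]
    rwa [map_mul, hσ] at h2
  calc σ (T (-1)) = σ (T (-1)) * (T (-1) * T 1) := by rw [← T_add]; norm_num
    _ = (σ (T (-1)) * T (-1)) * T 1 := by ring
    _ = T 1 := by rw [h1, one_mul]

private lemma sigma_T (σ : LaurentPolynomial ℤ →+* LaurentPolynomial ℤ)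
    (hσ : σ (T 1) = T (-1)) : ∀ m : ℤ, σ (T m) = T (-m) := by
  intro m
  induction m using Int.induction_on with
  | zero => simp
  | succ k ih => rw [T_add, map_mul, ih, hσ, ← T_add]; ring_nf
  | pred k ih =>
      rw [show (-(k:ℤ) - 1) = (-(k:ℤ)) + (-1) by ring, T_add, map_mul, ih,
        sigma_T_neg_one σ hσ, ← T_add]; ring_nf

private lemma sigma_eq_invert (σ : LaurentPolynomial ℤ →+* LaurentPolynomial ℤ)
    (hσ : σ (T 1) = T (-1)) (f : LaurentPolynomial ℤ) : σ f = invert f := by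
  induction f using LaurentPolynomial.induction_on' with
  | add p q hp hq => rw [map_add, map_add, hp, hq]
  | C_mul_T m a =>
      rw [map_mul, map_mul, sigma_T σ hσ, invert_T]
      congr 1
      rw [eq_intCast (LaurentPolynomial.C : ℤ →+* _) a, map_intCast, map_intCast]

private lemma const_coeff (f : LaurentPolynomial ℤ) :
    (invert f * f).coeff 0 = ∑ a ∈ f.coeff.support, (f.coeff a) ^ 2 := by
  rw [AddMonoidAlgebra.coeff_mul]
  have inner : ∀ a₁ : ℤ, (f.coeff.sum fun a₂ b₂ => if a₁ + a₂ = 0 then (invert f).coeff a₁ * b₂ else 0)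
      = f.coeff (-a₁) * f.coeff (-a₁) := by
    intro a₁
    rw [invert_apply]
    have : (f.coeff.sum fun a₂ b₂ => if a₁ + a₂ = 0 then f.coeff (-a₁) * b₂ else 0)
        = f.coeff.sum fun a₂ b₂ => if a₂ = -a₁ then f.coeff (-a₁) * b₂ else 0 := by
      apply Finsupp.sum_congr
      intro x _
      congr 1
      simp only [eq_iff_iff]
      omega
    rw [this, Finsupp.sum_ite_eq' f.coeff (-a₁) (fun _ b₂ => f.coeff (-a₁) * b₂)]
    split_ifs with hmem
    · rfl
    · rw [Finsupp.notMem_support_iff.mp hmem, mul_zero]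
  calc ((invert f).coeff.sum fun a₁ b₁ => f.coeff.sum fun a₂ b₂ => if a₁ + a₂ = 0 then b₁ * b₂ else 0)
      = (invert f).coeff.sum fun a₁ _ => f.coeff (-a₁) * f.coeff (-a₁) := by
        apply Finsupp.sum_congr
        intro x _
        exact inner x
    _ = ∑ a₁ ∈ (invert f).coeff.support, f.coeff (-a₁) * f.coeff (-a₁) := rfl
    _ = ∑ a ∈ f.coeff.support, (f.coeff a) ^ 2 := by
        refine Finset.sum_nbij' (fun a => -a) (fun a => -a) ?_ ?_ ?_ ?_ ?_
        · intro a ha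
          simp only [Finsupp.mem_support_iff] at ha ⊢
          rwa [invert_apply] at ha
        · intro a ha
          simp only [Finsupp.mem_support_iff, invert_apply, neg_neg] at ha ⊢
          exact ha
        · intro a _; simp
        · intro a _; simp
        · intro a _; simp [sq]

/-- In `R = ℤ[q,q⁻¹]` with the bar involution `σ` (the ring homomorphism
determined by `σ(q) = q⁻¹`): if `α₁, …, αₙ ∈ R` satisfy `∑ᵢ σ(αᵢ)·αᵢ = 1`, then there is
exactly one index `i` with `αᵢ ≠ 0`, and for this index `αᵢ = ±q^m` for some `m ∈ ℤ`. -/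
theorem stmt2 (n : ℕ)
    (σ : LaurentPolynomial ℤ →+* LaurentPolynomial ℤ)
    (hσ : σ (T 1) = T (-1))
    (α : Fin n → LaurentPolynomial ℤ)
    (h : ∑ i, σ (α i) * α i = 1) :
    ∃ i : Fin n, (α i ≠ 0 ∧ ∀ j : Fin n, α j ≠ 0 → j = i) ∧
      ∃ m : ℤ, α i = T m ∨ α i = -T m := by
  classical
  -- pass to coefficients at 0
  set c : Fin n → ℤ := fun i => ∑ a ∈ (α i).coeff.support, ((α i).coeff a) ^ 2 with hc
  have hsum : ∑ i, c i = 1 := by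
    have h0 := congrArg (fun f : LaurentPolynomial ℤ => f.coeff 0) h
    rw [AddMonoidAlgebra.coeff_sum, Finset.sum_apply'] at h0
    have hone : (1 : LaurentPolynomial ℤ).coeff 0 = 1 := by
      rw [AddMonoidAlgebra.one_def]
      exact Finsupp.single_eq_same
    rw [hone] at h0
    rw [← h0]
    apply Finset.sum_congr rfl
    intro i _
    show (∑ a ∈ (α i).coeff.support, (α i).coeff a ^ 2) = (σ (α i) * α i).coeff 0
    rw [sigma_eq_invert σ hσ, const_coeff]
  have hcnonneg : ∀ i, 0 ≤ c i := fun i => Finset.sum_nonneg fun a _ => sq_nonneg _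
  have hczero : ∀ i, c i = 0 → α i = 0 := by
    intro i hi
    have := (Finset.sum_eq_zero_iff_of_nonneg (fun a _ => sq_nonneg ((α i).coeff a))).mp hi
    ext a
    by_cases ha : a ∈ (α i).coeff.support
    · exact pow_eq_zero_iff (two_ne_zero) |>.mp (this a ha)
    · exact Finsupp.notMem_support_iff.mp ha
  -- exactly one i with c i ≠ 0
  obtain ⟨i, hi⟩ : ∃ i, c i ≠ 0 := by
    by_contra hall
    push_neg at hall
    rw [Finset.sum_eq_zero (fun i _ => hall i)] at hsum
    exact one_ne_zero hsum.symm
  have hci1 : c i = 1 := by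
    have h1 : c i ≤ ∑ j, c j :=
      Finset.single_le_sum (fun j _ => hcnonneg j) (Finset.mem_univ i)
    rw [hsum] at h1
    have h2 := hcnonneg i
    omega
  have hrest : ∀ j : Fin n, j ≠ i → c j = 0 := by
    have hsplit : ∑ j ∈ Finset.univ.erase i, c j + c i = 1 := by
      rw [Finset.sum_erase_add _ _ (Finset.mem_univ i)]; exact hsum
    have hz : ∑ j ∈ Finset.univ.erase i, c j = 0 := by omega
    intro j hj
    exact (Finset.sum_eq_zero_iff_of_nonneg (fun k _ => hcnonneg k)).mp hz j
      (Finset.mem_erase.mpr ⟨hj, Finset.mem_univ j⟩)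
  have hS : ∑ a ∈ (α i).coeff.support, (α i).coeff a ^ 2 = 1 := hci1
  have hαi : α i ≠ 0 := by
    intro h0
    rw [h0] at hS
    simp at hS
  refine ⟨i, ⟨hαi, fun j hj => ?_⟩, ?_⟩
  · by_contra hji
    exact hj (hczero j (hrest j hji))
  -- now α i = ± T a
  · have hterm : ∀ a ∈ (α i).coeff.support, 1 ≤ ((α i).coeff a) ^ 2 := by
      intro a ha
      have hne0 : (α i).coeff a ≠ 0 := Finsupp.mem_support_iff.mp ha
      have h2 : 0 < ((α i).coeff a)^2 := by positivity
      omega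
    have hcard : (α i).coeff.support.card ≤ 1 := by
      have hs := Finset.card_nsmul_le_sum (α i).coeff.support (fun a => ((α i).coeff a)^2) 1 hterm
      rw [nsmul_eq_mul, mul_one] at hs
      rw [hS] at hs
      exact_mod_cast hs
    have hne : (α i).coeff.support.Nonempty := Finsupp.support_nonempty_iff.mpr (AddMonoidAlgebra.coeff_eq_zero.not.mpr hαi)
    have hcard1 : (α i).coeff.support.card = 1 := le_antisymm hcard (Finset.card_pos.mpr hne)
    obtain ⟨a, hsupp⟩ := Finset.card_eq_one.mp hcard1
    have hfa : (α i).coeff = Finsupp.single a ((α i).coeff a) :=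
      ((Finsupp.support_eq_singleton).mp hsupp).2
    have hsq : ((α i).coeff a)^2 = 1 := by
      rw [hsupp, Finset.sum_singleton] at hS
      exact hS
    have hmul : ((α i).coeff a) * ((α i).coeff a) = 1 := by rw [← sq]; exact hsq
    rcases Int.isUnit_iff.mp (IsUnit.of_mul_eq_one _ hmul) with h1 | h1
    · exact ⟨a, Or.inl (AddMonoidAlgebra.ext (by rw [hfa, h1]; rfl))⟩
    · refine ⟨a, Or.inr ?_⟩
      apply AddMonoidAlgebra.ext
      rw [hfa, h1, AddMonoidAlgebra.coeff_neg]
      show Finsupp.single a (-1 : ℤ) = -Finsupp.single a 1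
      rw [Finsupp.single_neg]
end

section
/- Let B be a signed bipartite graph with sets E₀, E₁ and matrix M. Then the q-Gram matrix G of B is invertible over ℤ[q,q⁻¹]; its inverse is the block matrix [[I + q²·M·Mᵗ, −q·M],[−q·Mᵗ, I]], and det G = 1. In particular, the q-lattice R^{E₀⊔E₁} with the σ-sesquilinear form ⟨x,y⟩ := ∑_{a,b} σ(x_a)·G(a,b)·y_b, obtained by gluing the q-flow and q-cut lattices of B, is unimodular. -/
open LaurentPolynomial Matrix

set_option maxRecDepth 8000

/-- Let `B` be a signed bipartite graph with parts `E₀, E₁` and signed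
adjacency matrix `M` (entries in `{-1,0,1}`).  Over `R = ℤ[q,q⁻¹]`, the q-Gram matrix
`G = [[I, q·M],[q·Mᵗ, I + q²·Mᵗ·M]]` is invertible over `R`, with inverse the block matrix
`[[I + q²·M·Mᵗ, −q·M],[−q·Mᵗ, I]]`, and `det G = 1`.  In particular the q-lattice obtained
by gluing the q-flow and q-cut lattices of `B` is unimodular. -/
theorem stmt8 (E₀ E₁ : Type) [Fintype E₀] [Fintype E₁] [DecidableEq E₀] [DecidableEq E₁]
    (M : Matrix E₀ E₁ ℤ) (hM : ∀ i j, M i j = -1 ∨ M i j = 0 ∨ M i j = 1) :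
    let M' : Matrix E₀ E₁ (LaurentPolynomial ℤ) := M.map (Int.cast : ℤ → LaurentPolynomial ℤ)
    let G : Matrix (E₀ ⊕ E₁) (E₀ ⊕ E₁) (LaurentPolynomial ℤ) :=
      Matrix.fromBlocks 1 ((T 1 : LaurentPolynomial ℤ) • M')
        ((T 1 : LaurentPolynomial ℤ) • M'.transpose)
        (1 + (T 2 : LaurentPolynomial ℤ) • (M'.transpose * M'))
    let Ginv : Matrix (E₀ ⊕ E₁) (E₀ ⊕ E₁) (LaurentPolynomial ℤ) :=
      Matrix.fromBlocks (1 + (T 2 : LaurentPolynomial ℤ) • (M' * M'.transpose))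
        (-((T 1 : LaurentPolynomial ℤ) • M'))
        (-((T 1 : LaurentPolynomial ℤ) • M'.transpose)) 1
    G * Ginv = 1 ∧ Ginv * G = 1 ∧ G.det = 1 := by
  intro M' G Ginv
  have hT : (T 2 : LaurentPolynomial ℤ) = T 1 * T 1 := by
    rw [← T_add]; norm_num
  set t : LaurentPolynomial ℤ := T 1 with ht
  set L : Matrix (E₀ ⊕ E₁) (E₀ ⊕ E₁) (LaurentPolynomial ℤ) :=
    Matrix.fromBlocks 1 0 (t • M'.transpose) 1 with hL
  set U : Matrix (E₀ ⊕ E₁) (E₀ ⊕ E₁) (LaurentPolynomial ℤ) :=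
    Matrix.fromBlocks 1 (t • M') 0 1 with hU
  set L' : Matrix (E₀ ⊕ E₁) (E₀ ⊕ E₁) (LaurentPolynomial ℤ) :=
    Matrix.fromBlocks 1 0 (-(t • M'.transpose)) 1 with hL'
  set U' : Matrix (E₀ ⊕ E₁) (E₀ ⊕ E₁) (LaurentPolynomial ℤ) :=
    Matrix.fromBlocks 1 (-(t • M')) 0 1 with hU'
  have hG : G = L * U := by
    simp only [G, hL, hU, Matrix.fromBlocks_multiply]
    congr 1 <;> simp [Matrix.smul_mul, Matrix.mul_smul, smul_smul, hT, add_comm, ht]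
  have hGinv : Ginv = U' * L' := by
    simp only [Ginv, hU', hL', Matrix.fromBlocks_multiply]
    congr 1 <;> simp [Matrix.smul_mul, Matrix.mul_smul, smul_smul, hT, ht]
  have hUU : U * U' = 1 := by
    simp only [hU, hU', Matrix.fromBlocks_multiply, ← Matrix.fromBlocks_one]
    congr 1 <;> simp
  have hUU' : U' * U = 1 := by
    simp only [hU, hU', Matrix.fromBlocks_multiply, ← Matrix.fromBlocks_one]
    congr 1 <;> simp
  have hLL : L' * L = 1 := by
    simp only [hL, hL', Matrix.fromBlocks_multiply, ← Matrix.fromBlocks_one]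
    congr 1 <;> simp
  have hLL' : L * L' = 1 := by
    simp only [hL, hL', Matrix.fromBlocks_multiply, ← Matrix.fromBlocks_one]
    congr 1 <;> simp
  have h1 : G * Ginv = 1 := by
    rw [hG, hGinv, Matrix.mul_assoc, ← Matrix.mul_assoc U, hUU, Matrix.one_mul, hLL']
  have h2 : Ginv * G = 1 := by
    rw [hG, hGinv, Matrix.mul_assoc, ← Matrix.mul_assoc L', hLL, Matrix.one_mul, hUU']
  refine ⟨h1, h2, ?_⟩
  rw [hG, Matrix.det_mul, Matrix.det_fromBlocks_zero₁₂, Matrix.det_fromBlocks_zero₂₁]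
  simp
end

section
/- Let Γ be a finite connected oriented simple graph with spanning tree T, and fix a vertex v₀ ∈ V. Define the q-incidence matrix D_q ∈ Mat_{V×E}(ℤ[q]) by D_q(v,e) = D(v,e) for e ∈ T and D_q(v,e) = q·D(v,e) for e ∉ T, and let D₀ be the submatrix of D_q obtained by deleting the row indexed by v₀. Then det(D₀·D₀ᵗ) = ∑_{T'} q^{2·|T'∖T|}, where the sum ranges over all spanning trees T' of Γ. -/
/-- The incidence matrix of an oriented simple graph. -/
def incMat {V : Type} [DecidableEq V] (G : SimpleGraph V)
    (head tail : G.edgeSet → V) : Matrix V G.edgeSet ℤ :=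
  fun v e => if v = head e then 1 else if v = tail e then -1 else 0

/-- `head` and `tail` form an orientation of `G`. -/
def IsOrientation {V : Type} (G : SimpleGraph V) (head tail : G.edgeSet → V) : Prop :=
  ∀ e : G.edgeSet, (e : Sym2 V) = s(head e, tail e)

/-- `T` is a spanning tree of `G`. -/
def IsSpanningTree {V : Type} [Fintype V] (G : SimpleGraph V) (T : Set G.edgeSet) : Prop :=
  (SimpleGraph.fromEdgeSet (Subtype.val '' T)).Connected ∧ T.ncard + 1 = Fintype.card V

open Matrix Finset

lemma det_mul_eq_sum_fun {R : Type*} [CommRing R] {m n : Type*} [Fintype m] [Fintype n]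
    [DecidableEq m] (A : Matrix m n R) (B : Matrix n m R) :
    (A * B).det = ∑ f : m → n, (A.submatrix id f).det * ∏ i, B (f i) i := by
  rw [Matrix.det_apply]
  simp only [Matrix.mul_apply]
  have h1 : ∀ σ : Equiv.Perm m, (∏ i, ∑ j, A (σ i) j * B j i)
      = ∑ f : m → n, ∏ i, A (σ i) (f i) * B (f i) i := by
    intro σ
    rw [Finset.prod_univ_sum]
    simp [Fintype.piFinset_univ]
  simp_rw [h1, Finset.smul_sum]
  rw [Finset.sum_comm]
  refine Finset.sum_congr rfl fun f _ => ?_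
  rw [Matrix.det_apply, Finset.sum_mul]
  refine Finset.sum_congr rfl fun σ _ => ?_
  rw [Finset.prod_mul_distrib, smul_mul_assoc]
  congr 1

lemma cauchy_binet {R : Type*} [CommRing R] {m n : Type*} [Fintype m] [Fintype n]
    [DecidableEq m] [DecidableEq n] (A : Matrix m n R) (B : Matrix n m R)
    (g : Finset n → (m → n))
    (hg : ∀ S : Finset n, S.card = Fintype.card m →
      Function.Injective (g S) ∧ ∀ i, g S i ∈ S) :
    (A * B).det = ∑ S ∈ Finset.univ.powersetCard (Fintype.card m),
      (A.submatrix id (g S)).det * (B.submatrix (g S) id).det := by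
  classical
  have himg : ∀ S : Finset n, S.card = Fintype.card m → Finset.univ.image (g S) = S := by
    intro S hS
    apply Finset.eq_of_subset_of_card_le
    · intro x hx
      obtain ⟨i, _, rfl⟩ := Finset.mem_image.mp hx
      exact (hg S hS).2 i
    · rw [Finset.card_image_of_injective _ (hg S hS).1, hS]
      exact le_of_eq (Finset.card_univ).symm
  rw [det_mul_eq_sum_fun]
  rw [← Finset.sum_filter_of_ne (p := fun f : m → n => Function.Injective f)
    (by
      intro f _ hne
      by_contra hinj
      rw [Function.not_injective_iff] at hinj
      obtain ⟨a, b, hab, hne'⟩ := hinj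
      exact hne (by rw [Matrix.det_zero_of_column_eq hne' (fun k => by
        simp [Matrix.submatrix_apply, hab]), zero_mul]))]
  rw [← Finset.sum_fiberwise_of_maps_to (g := fun f : m → n => Finset.univ.image f)
    (t := Finset.univ.powersetCard (Fintype.card m))
    (by
      intro f hf
      rw [Finset.mem_filter] at hf
      rw [Finset.mem_powersetCard]
      exact ⟨Finset.subset_univ _, by rw [Finset.card_image_of_injective _ hf.2,
        Finset.card_univ]⟩)]
  refine Finset.sum_congr rfl fun S hS => ?_
  rw [Finset.mem_powersetCard] at hS
  have hScard := hS.2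
  obtain ⟨hginj, hgmem⟩ := hg S hScard
  -- reindex the inner sum by permutations
  have key : ∑ f ∈ (Finset.univ.filter (fun f : m → n => Function.Injective f)).filter
        (fun f => Finset.univ.image f = S),
        (A.submatrix id f).det * ∏ i, B (f i) i
      = ∑ σ : Equiv.Perm m,
        (A.submatrix id (g S ∘ σ)).det * ∏ i, B (g S (σ i)) i := by
    have hgS' : Function.Bijective (fun i : m => (⟨g S i, hgmem i⟩ : {x // x ∈ S})) := by
      rw [Fintype.bijective_iff_injective_and_card]
      constructor
      · intro a b hab
        exact hginj (congrArg Subtype.val hab)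
      · rw [Fintype.card_coe, hScard]
    set g' : m ≃ {x // x ∈ S} := Equiv.ofBijective _ hgS' with hg'
    have hmemS : ∀ (f : m → n), f ∈ (Finset.univ.filter
        (fun f : m → n => Function.Injective f)).filter
        (fun f => Finset.univ.image f = S) → ∀ i, f i ∈ S := by
      intro f hf i
      rw [Finset.mem_filter] at hf
      rw [← hf.2]
      exact Finset.mem_image_of_mem f (Finset.mem_univ i)
    have hinjf : ∀ (f : m → n), f ∈ (Finset.univ.filter
        (fun f : m → n => Function.Injective f)).filter
        (fun f => Finset.univ.image f = S) → Function.Injective f := by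
      intro f hf
      rw [Finset.mem_filter, Finset.mem_filter] at hf
      exact hf.1.2
    have hbijf : ∀ (f : m → n) (hf : ∀ i, f i ∈ S) (hfi : Function.Injective f),
        Function.Bijective (fun i : m => (⟨f i, hf i⟩ : {x // x ∈ S})) := by
      intro f hf hfi
      rw [Fintype.bijective_iff_injective_and_card]
      exact ⟨fun a b hab => hfi (congrArg Subtype.val hab),
        by rw [Fintype.card_coe, hScard]⟩
    have hginv : ∀ x : {x // x ∈ S}, g S (g'.symm x) = x.val := by
      intro x
      have h := g'.apply_symm_apply x
      calc g S (g'.symm x) = (g' (g'.symm x)).val := rfl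
        _ = x.val := by rw [h]
    refine Finset.sum_bij' (i := fun f hf =>
        (Equiv.ofBijective _ (hbijf f (hmemS f hf) (hinjf f hf))).trans g'.symm)
      (j := fun σ _ => g S ∘ σ) (fun _ _ => Finset.mem_univ _) ?_ ?_ ?_ ?_
    · intro σ _
      rw [Finset.mem_filter, Finset.mem_filter]
      refine ⟨⟨Finset.mem_univ _, hginj.comp σ.injective⟩, ?_⟩
      rw [show Finset.univ.image (g S ∘ σ) = Finset.univ.image (g S) from ?_,
        himg S hScard]
      rw [← Finset.image_image]
      congr 1
      exact Finset.image_univ_equiv σ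
    · intro f hf
      funext i
      show g S ((Equiv.ofBijective _ (hbijf f (hmemS f hf) (hinjf f hf))).trans
        g'.symm <| i) = f i
      rw [Equiv.trans_apply, hginv]
      rfl
    · intro σ hσ
      ext i
      rw [Equiv.trans_apply, Equiv.symm_apply_eq]
      exact Subtype.ext rfl
    · intro f hf
      have hcomp : f = g S ∘ ((Equiv.ofBijective _
          (hbijf f (hmemS f hf) (hinjf f hf))).trans g'.symm) := by
        funext i
        rw [Function.comp_apply, Equiv.trans_apply, hginv]
        rfl
      conv_lhs => rw [hcomp]
      simp only [Function.comp_apply]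
  rw [key]
  have hsub : ∀ σ : Equiv.Perm m, (A.submatrix id (g S ∘ σ)).det
      = Equiv.Perm.sign σ * (A.submatrix id (g S)).det := by
    intro σ
    have : A.submatrix id (g S ∘ σ) = (A.submatrix id (g S)).submatrix id σ := rfl
    rw [this, Matrix.det_permute']
  simp_rw [hsub]
  rw [Matrix.det_apply (M := B.submatrix (g S) id), Finset.mul_sum]
  refine Finset.sum_congr rfl fun σ _ => ?_
  simp only [Matrix.submatrix_apply, id_eq]
  rw [Units.smul_def, zsmul_eq_mul]
  ring


section Walks
variable {V : Type} [DecidableEq V] (G : SimpleGraph V) (head tail : G.edgeSet → V)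
variable (H : SimpleGraph V)

/-- signed edge-multiplicity vector of a walk -/
def walkVec : ∀ {a b : V}, H.Walk a b → G.edgeSet → ℤ
  | _, _, SimpleGraph.Walk.nil, _ => 0
  | a, _, SimpleGraph.Walk.cons (v := c) _ p, e =>
      (if (e : Sym2 V) = s(a, c) then (if a = head e then 1 else (-1)) else 0)
      + walkVec p e

lemma head_ne_tail (hor : IsOrientation G head tail) (e : G.edgeSet) :
    head e ≠ tail e := by
  intro h
  have hd := G.not_isDiag_of_mem_edgeSet e.prop
  rw [hor e, h] at hd
  exact hd (Sym2.mk_isDiag_iff.mpr rfl)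

lemma incMat_eq (hor : IsOrientation G head tail) (u : V) (e : G.edgeSet) :
    incMat G head tail u e
      = (if u = head e then 1 else 0) - (if u = tail e then 1 else 0) := by
  have hne := head_ne_tail G head tail hor e
  unfold incMat
  split_ifs with h1 h2
  · exact absurd (h1.symm.trans h2) hne
  · norm_num
  · norm_num
  · norm_num

lemma walkVec_support {S : Set G.edgeSet}
    {a b : V} (p : (SimpleGraph.fromEdgeSet (Subtype.val '' S)).Walk a b)
    (e : G.edgeSet) (he : e ∉ S) :
    walkVec G head (SimpleGraph.fromEdgeSet (Subtype.val '' S)) p e = 0 := by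
  induction p with
  | nil => rfl
  | @cons a c b h p ih =>
    rw [walkVec, ih, add_zero]
    rw [if_neg]
    intro hval
    rcases ((SimpleGraph.fromEdgeSet_adj _).mp h).1 with ⟨ε, hεS, hεval⟩
    rw [← hval] at hεval
    exact he (Subtype.ext hεval ▸ hεS)

lemma walkVec_telescope [Fintype G.edgeSet] (hor : IsOrientation G head tail)
    {S : Set G.edgeSet}
    {a b : V} (p : (SimpleGraph.fromEdgeSet (Subtype.val '' S)).Walk a b) (u : V) :
    ∑ e : G.edgeSet, incMat G head tail u e
        * walkVec G head (SimpleGraph.fromEdgeSet (Subtype.val '' S)) p e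
      = (if u = a then 1 else 0) - (if u = b then 1 else 0) := by
  induction p with
  | nil => simp [walkVec]
  | @cons a c b h p ih =>
    simp only [walkVec, mul_add, Finset.sum_add_distrib, ih]
    have hadj := (SimpleGraph.fromEdgeSet_adj _).mp h
    obtain ⟨⟨ε, hεS, hεval⟩, hac⟩ := hadj
    have hstep : ∑ e : G.edgeSet, incMat G head tail u e *
        (if (e : Sym2 V) = s(a, c) then (if a = head e then 1 else (-1)) else 0)
        = (if u = a then 1 else 0) - (if u = c then 1 else 0) := by
      rw [Finset.sum_eq_single ε]
      · rw [if_pos hεval, incMat_eq G head tail hor]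
        have hsym : s(head ε, tail ε) = s(a, c) := by rw [← hor ε, hεval]
        rcases Sym2.eq_iff.mp hsym with ⟨h1, h2⟩ | ⟨h1, h2⟩
        · rw [h1, h2, if_pos rfl]; ring
        · rw [h1, h2, if_neg hac]; ring
      · intro e _ hne
        rw [if_neg, mul_zero]
        intro hval
        exact hne (Subtype.ext (hval.trans hεval.symm))
      · intro habs
        exact absurd (Finset.mem_univ ε) habs
    rw [hstep]
    ring
end Walks

section DetLemmas
open scoped Classical
variable {V : Type} [Fintype V] [DecidableEq V] {G : SimpleGraph V}
  [Fintype G.edgeSet]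

lemma img_g {v₀ : V} (S : Finset G.edgeSet) (g : {v : V // v ≠ v₀} → G.edgeSet)
    (hginj : Function.Injective g) (hgmem : ∀ i, g i ∈ S)
    (hScard : S.card = Fintype.card {v : V // v ≠ v₀}) :
    Finset.univ.image g = S := by
  apply Finset.eq_of_subset_of_card_le
  · intro x hx
    obtain ⟨i, _, rfl⟩ := Finset.mem_image.mp hx
    exact hgmem i
  · rw [Finset.card_image_of_injective _ hginj, hScard, Finset.card_univ]

lemma det_sq_one_of_connected (head tail : G.edgeSet → V)
    (hor : IsOrientation G head tail) {v₀ : V}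
    (S : Finset G.edgeSet) (g : {v : V // v ≠ v₀} → G.edgeSet)
    (hginj : Function.Injective g) (hgmem : ∀ i, g i ∈ S)
    (hScard : S.card = Fintype.card {v : V // v ≠ v₀})
    (hc : (SimpleGraph.fromEdgeSet (Subtype.val '' (S : Set G.edgeSet))).Connected) :
    (Matrix.of fun (u j : {v : V // v ≠ v₀}) =>
      incMat G head tail u.val (g j)).det ^ 2 = 1 := by
  set H := SimpleGraph.fromEdgeSet (Subtype.val '' (S : Set G.edgeSet)) with hH
  have hwalk : ∀ v : V, H.Walk v v₀ := fun v => (hc.preconnected v v₀).some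
  set N : Matrix {v : V // v ≠ v₀} {v : V // v ≠ v₀} ℤ :=
    Matrix.of fun u j => incMat G head tail u.val (g j) with hN
  set P : Matrix {v : V // v ≠ v₀} {v : V // v ≠ v₀} ℤ :=
    Matrix.of fun j u => walkVec G head H (hwalk u.val) (g j) with hP
  have hNP : N * P = 1 := by
    ext u w
    rw [Matrix.mul_apply]
    have hre : ∑ j : {v : V // v ≠ v₀}, N u j * P j w
        = ∑ e : G.edgeSet, incMat G head tail u.val e
          * walkVec G head H (hwalk w.val) e :=
      calc ∑ j : {v : V // v ≠ v₀}, N u j * P j w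
          = ∑ e ∈ Finset.univ.image g, incMat G head tail u.val e
            * walkVec G head H (hwalk w.val) e := by
            rw [Finset.sum_image (fun a _ b _ h => hginj h)]
            rfl
        _ = ∑ e : G.edgeSet, incMat G head tail u.val e
            * walkVec G head H (hwalk w.val) e := by
            apply Finset.sum_subset (Finset.subset_univ _)
            intro e _ he
            rw [img_g S g hginj hgmem hScard] at he
            rw [walkVec_support G head (hwalk w.val) e he, mul_zero]
    rw [hre, walkVec_telescope G head tail hor (hwalk w.val) u.val]
    rw [if_neg u.prop]
    by_cases h : u = w
    · rw [if_pos (by rw [h]), h, sub_zero, Matrix.one_apply_eq]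
    · rw [if_neg (fun hv => h (Subtype.ext hv)), sub_zero, Matrix.one_apply_ne h]
  have hdet : N.det * P.det = 1 := by
    rw [← Matrix.det_mul, hNP, Matrix.det_one]
  rcases Int.isUnit_iff.mp (IsUnit.of_mul_eq_one _ hdet) with h | h <;> rw [h] <;> norm_num

lemma det_zero_of_not_connected (head tail : G.edgeSet → V)
    (hor : IsOrientation G head tail) {v₀ : V}
    (S : Finset G.edgeSet) (g : {v : V // v ≠ v₀} → G.edgeSet)
    (hgmem : ∀ i, g i ∈ S)
    (hc : ¬ (SimpleGraph.fromEdgeSet (Subtype.val '' (S : Set G.edgeSet))).Connected) :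
    (Matrix.of fun (u j : {v : V // v ≠ v₀}) =>
      incMat G head tail u.val (g j)).det = 0 := by
  set H := SimpleGraph.fromEdgeSet (Subtype.val '' (S : Set G.edgeSet)) with hH
  rw [← Matrix.exists_vecMul_eq_zero_iff]
  set C : Set V := {v : V | ¬ H.Reachable v v₀} with hC
  have hv₀C : v₀ ∉ C := fun h => h (SimpleGraph.Reachable.refl v₀)
  have hCne : ∃ a, a ∈ C := by
    by_contra hno
    push_neg at hno
    apply hc
    rw [SimpleGraph.connected_iff_exists_forall_reachable]
    exact ⟨v₀, fun w => (not_not.mp (hno w)).symm⟩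
  obtain ⟨a₀, ha₀⟩ := hCne
  have ha₀v₀ : a₀ ≠ v₀ := fun h => hv₀C (h ▸ ha₀)
  refine ⟨fun u => if u.val ∈ C then 1 else 0, ?_, ?_⟩
  · intro h0
    have := congrFun h0 ⟨a₀, ha₀v₀⟩
    simp only [if_pos ha₀] at this
    exact one_ne_zero this
  · funext j
    rw [Matrix.vecMul, dotProduct]
    set ε := g j with hε
    have hadj : H.Adj (head ε) (tail ε) := by
      rw [hH, SimpleGraph.fromEdgeSet_adj]
      refine ⟨⟨ε, Finset.mem_coe.mpr (hgmem j), (hor ε)⟩,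
        head_ne_tail G head tail hor ε⟩
    have hiff : head ε ∈ C ↔ tail ε ∈ C := by
      constructor
      · intro h ht
        exact h (hadj.reachable.trans ht)
      · intro h hh
        exact h (hadj.symm.reachable.trans hh)
    have hV : ∑ v : V, (if v ∈ C then (1:ℤ) else 0) * incMat G head tail v ε = 0 := by
      simp_rw [incMat_eq G head tail hor, mul_sub]
      rw [Finset.sum_sub_distrib]
      have h1 : ∀ w : V, ∑ v : V, (if v ∈ C then (1:ℤ) else 0) * (if v = w then 1 else 0)
          = if w ∈ C then 1 else 0 := by
        intro w
        rw [Finset.sum_eq_single w]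
        · rw [if_pos rfl, mul_one]
        · intro v _ hv
          rw [if_neg hv, mul_zero]
        · intro h; exact absurd (Finset.mem_univ w) h
      rw [h1, h1]
      by_cases h : head ε ∈ C
      · rw [if_pos h, if_pos (hiff.mp h), sub_self]
      · rw [if_neg h, if_neg (fun ht => h (hiff.mpr ht)), sub_self]
    have hsub : ∑ u : {v : V // v ≠ v₀}, (if u.val ∈ C then (1:ℤ) else 0)
        * incMat G head tail u.val ε
        = ∑ v ∈ Finset.univ.erase v₀, (if v ∈ C then (1:ℤ) else 0)
          * incMat G head tail v ε :=
      (Finset.sum_subtype (p := fun v : V => v ≠ v₀) (Finset.univ.erase v₀)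
        (by intro x; rw [Finset.mem_erase]; simp)
        (fun v => (if v ∈ C then (1:ℤ) else 0) * incMat G head tail v ε)).symm
    have herase : ∑ v ∈ Finset.univ.erase v₀, (if v ∈ C then (1:ℤ) else 0)
        * incMat G head tail v ε = 0 := by
      have h2 := Finset.sum_erase_add Finset.univ
        (fun v => (if v ∈ C then (1:ℤ) else 0) * incMat G head tail v ε) (Finset.mem_univ v₀)
      beta_reduce at h2
      rw [hV, if_neg hv₀C, zero_mul, add_zero] at h2
      exact h2
    show ∑ u : {v : V // v ≠ v₀}, (if u.val ∈ C then (1:ℤ) else 0)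
        * incMat G head tail u.val (g j) = 0
    rw [← hε, hsub, herase]
end DetLemmas

open scoped Classical in
/-- Let `Γ` be a finite connected oriented simple graph with spanning
tree `T`, and fix a vertex `v₀`.  Let `D_q` be the q-incidence matrix over `ℤ[q]`
(columns ofedges outside `T` scaled by `q`), and `D₀` the submatrix obtained by deleting
the row of `v₀`.  Then `det (D₀·D₀ᵗ) = ∑_{T'} q^{2·|T'∖T|}`, summed over all spanning
trees `T'` of `Γ`. -/
theorem stmt15 (V : Type) [Fintype V] [DecidableEq V] (G : SimpleGraph V)
    [Fintype G.edgeSet]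
    (head tail : G.edgeSet → V) (hor : IsOrientation G head tail)
    (hconn : G.Connected)
    (T : Set G.edgeSet) (hT : IsSpanningTree G T)
    (v₀ : V) :
    let Dq : Matrix V G.edgeSet (Polynomial ℤ) := fun v e =>
      if e ∈ T then ((incMat G head tail v e : ℤ) : Polynomial ℤ)
      else Polynomial.X * ((incMat G head tail v e : ℤ) : Polynomial ℤ)
    let D₀ : Matrix {v : V // v ≠ v₀} G.edgeSet (Polynomial ℤ) := fun v e => Dq v.val e
    (D₀ * D₀.transpose).det =
      ∑ T' : {S : Set G.edgeSet // IsSpanningTree G S},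
        Polynomial.X ^ (2 * (T'.val \ T).ncard) := by
  
  intro Dq D₀
  classical
  have hVpos : 1 ≤ Fintype.card V := Fintype.card_pos_iff.mpr ⟨v₀⟩
  have hcardm : Fintype.card {v : V // v ≠ v₀} = Fintype.card V - 1 := by
    have h1 : Fintype.card {v : V // v ≠ v₀} = Fintype.card {v : V // ¬ (v = v₀)} :=
      Fintype.card_congr (Equiv.refl _)
    rw [h1, Fintype.card_subtype_compl, Fintype.card_subtype_eq]
  -- a default function for the irrelevant case
  have hfun : Nonempty ({v : V // v ≠ v₀} → G.edgeSet) := by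
    by_cases hV1 : Fintype.card V = 1
    · have hempty : IsEmpty {v : V // v ≠ v₀} := by
        rw [← Fintype.card_eq_zero_iff, hcardm, hV1]
      exact ⟨fun i => (hempty.elim i)⟩
    · have hTcard : T.ncard ≠ 0 := by
        have := hT.2
        omega
      obtain ⟨e₀, _⟩ := Set.nonempty_of_ncard_ne_zero hTcard
      exact ⟨fun _ => e₀⟩
  set g : Finset G.edgeSet → ({v : V // v ≠ v₀} → G.edgeSet) := fun S =>
    if h : S.card = Fintype.card {v : V // v ≠ v₀} then
      (fun i => (((Fintype.equivOfCardEq (by rw [Fintype.card_coe]; exact h.symm))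
        : {v : V // v ≠ v₀} ≃ {x // x ∈ S}) i : G.edgeSet))
    else hfun.some with hgdef
  have hg : ∀ S : Finset G.edgeSet, S.card = Fintype.card {v : V // v ≠ v₀} →
      Function.Injective (g S) ∧ ∀ i, g S i ∈ S := by
    intro S h
    rw [hgdef]
    simp only [dif_pos h]
    constructor
    · intro a b hab
      exact (Fintype.equivOfCardEq _).injective (Subtype.ext hab)
    · intro i
      exact ((Fintype.equivOfCardEq (by rw [Fintype.card_coe]; exact h.symm)
        : {v : V // v ≠ v₀} ≃ {x // x ∈ S}) i).prop
  rw [cauchy_binet D₀ D₀.transpose g hg]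
  -- evaluate each term
  have hterm : ∀ S ∈ Finset.univ.powersetCard (Fintype.card {v : V // v ≠ v₀}),
      (D₀.submatrix id (g S)).det * (D₀.transpose.submatrix (g S) id).det
      = if (SimpleGraph.fromEdgeSet (Subtype.val '' (S : Set G.edgeSet))).Connected
        then Polynomial.X ^ (2 * ((S : Set G.edgeSet) \ T).ncard) else 0 := by
    intro S hS
    rw [Finset.mem_powersetCard] at hS
    have hScard := hS.2
    obtain ⟨hginj, hgmem⟩ := hg S hScard
    have htr : D₀.transpose.submatrix (g S) id = (D₀.submatrix id (g S)).transpose := by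
      rw [Matrix.transpose_submatrix]
    rw [htr, Matrix.det_transpose, ← pow_two]
    set N : Matrix {v : V // v ≠ v₀} {v : V // v ≠ v₀} ℤ :=
      Matrix.of fun u j => incMat G head tail u.val (g S j) with hNdef
    have hfact : D₀.submatrix id (g S)
        = Matrix.of fun u j => (if g S j ∈ T then (1 : Polynomial ℤ) else Polynomial.X)
          * (N.map (Int.castRingHom (Polynomial ℤ))) u j := by
      funext u j
      show Dq u.val (g S j) = _
      simp only [Matrix.of_apply, Matrix.map_apply, hNdef, Dq]
      split_ifs with h
      · rw [one_mul]; rfl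
      · rfl
    rw [hfact, Matrix.det_mul_row, mul_pow]
    have hdetN : (N.map (Int.castRingHom (Polynomial ℤ))).det
        = ((N.det : ℤ) : Polynomial ℤ) := by
      calc (N.map (Int.castRingHom (Polynomial ℤ))).det
          = ((Int.castRingHom (Polynomial ℤ)).mapMatrix N).det := rfl
        _ = (Int.castRingHom (Polynomial ℤ)) N.det := (RingHom.map_det _ _).symm
        _ = ((N.det : ℤ) : Polynomial ℤ) := rfl
    have hprod : (∏ j : {v : V // v ≠ v₀}, if g S j ∈ T then (1 : Polynomial ℤ)
        else Polynomial.X) = Polynomial.X ^ (((S : Set G.edgeSet)) \ T).ncard := by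
      rw [Finset.prod_ite, Finset.prod_const_one, one_mul, Finset.prod_const]
      congr 1
      have himage : (Finset.univ.filter (fun j => ¬ g S j ∈ T)).card
          = (S.filter (fun e => ¬ e ∈ T)).card := by
        conv_rhs => rw [← img_g S (g S) hginj hgmem hScard]
        rw [Finset.filter_image, Finset.card_image_of_injective _ hginj]
      rw [himage]
      have hsets : ((S : Set G.edgeSet) \ T) = ↑(S.filter (fun e => ¬ e ∈ T)) := by
        ext e
        simp [Set.mem_diff]
      rw [hsets, Set.ncard_coe_finset]
    rw [hdetN, hprod, ← pow_mul]
    by_cases hc : (SimpleGraph.fromEdgeSet (Subtype.val '' (S : Set G.edgeSet))).Connected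
    · rw [if_pos hc]
      have := det_sq_one_of_connected head tail hor S (g S) hginj hgmem hScard hc
      rw [← hNdef] at this
      rw [← Int.cast_pow, this]
      simp [mul_comm]
    · rw [if_neg hc]
      have := det_zero_of_not_connected head tail hor S (g S) hgmem hc
      rw [← hNdef] at this
      rw [this]
      simp
  rw [Finset.sum_congr rfl hterm]
  rw [← Finset.sum_filter]
  -- bijection with spanning trees
  refine Finset.sum_bij' (i := fun S hS => (⟨(S : Set G.edgeSet), ?_⟩ :
      {S : Set G.edgeSet // IsSpanningTree G S}))
    (j := fun T' _ => T'.val.toFinset) (fun _ _ => Finset.mem_univ _) ?_ ?_ ?_ ?_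
  · rw [Finset.mem_filter, Finset.mem_powersetCard] at hS
    refine ⟨hS.2, ?_⟩
    rw [Set.ncard_coe_finset, hS.1.2, hcardm]
    omega
  · intro T' _
    rw [Finset.mem_filter, Finset.mem_powersetCard]
    have hcoe : (T'.val.toFinset : Set G.edgeSet) = T'.val := Set.coe_toFinset _
    refine ⟨⟨Finset.subset_univ _, ?_⟩, ?_⟩
    · rw [← Set.ncard_coe_finset, hcoe, hcardm]
      have := T'.prop.2
      omega
    · rw [hcoe]
      exact T'.prop.1
  · intro S hS
    simp
  · intro T' _
    exact Subtype.ext (Set.coe_toFinset _)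
  · intro S hS
    rfl
end

section
/- Let Γ be a finite connected oriented simple graph with spanning tree T, fix a vertex v₀ ∈ V, and let D₀ be the q-incidence matrix D_q with the row indexed by v₀ deleted, and Q₀ := D₀·D₀ᵗ. Then there exists an integer matrix P ∈ Mat_{(V∖{v₀})×T}(ℤ) such that G_C(Γ,T) = Pᵗ·Q₀·P (the matrix products computed over ℤ[q,q⁻¹] after regarding P as a matrix of constants); moreover det P = ±1. In particular, Q₀ is a Gram matrix for the q-cut lattice of (Γ,T). -/
open LaurentPolynomial

/-- The q-cut Gram matrix of `(Γ,T)` built from a family `K` of fundamental cuts. -/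
noncomputable def qCutGram {V : Type} [DecidableEq V] (G : SimpleGraph V)
    [Fintype G.edgeSet] (T : Set G.edgeSet)
    (K : {e : G.edgeSet // e ∈ T} → G.edgeSet → ℤ) :
    Matrix {e : G.edgeSet // e ∈ T} {e : G.edgeSet // e ∈ T} (LaurentPolynomial ℤ) :=
  fun e e' => if e = e' then
    1 + (((∑ f, K e f * K e f) - 1 : ℤ) : LaurentPolynomial ℤ) * LaurentPolynomial.T 2
  else (((∑ f, K e f * K e' f : ℤ)) : LaurentPolynomial ℤ) * LaurentPolynomial.T 2

lemma sum_subtype_ne_aux {V : Type} [Fintype V] [DecidableEq V] (v₀ : V)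
    {M : Type*} [AddCommMonoid M] (g : V → M) (h0 : g v₀ = 0) :
    ∑ v : {v : V // v ≠ v₀}, g v.val = ∑ v, g v := by
  rw [← Finset.sum_subtype (Finset.univ.erase v₀) (fun x => by simp) g]
  exact Finset.sum_erase _ h0

open scoped Classical in
/-- Let `Γ` be a finite connected oriented simple graph with spanning
tree `T`, `v₀` a vertex, `D₀` the q-incidence matrix with the row of `v₀` deleted, and
`Q₀ = D₀·D₀ᵗ`.  Then there is an integer matrix `P` with `G_C(Γ,T) = Pᵗ·Q₀·P` and
`det P = ±1`; in particular `Q₀` is a Gram matrix for the q-cut lattice of `(Γ,T)`. -/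
theorem stmt17 (V : Type) [Fintype V] [DecidableEq V] (G : SimpleGraph V)
    [Fintype G.edgeSet]
    (head tail : G.edgeSet → V) (hor : IsOrientation G head tail)
    (hconn : G.Connected)
    (T : Set G.edgeSet) (hT : IsSpanningTree G T)
    (K : {e : G.edgeSet // e ∈ T} → G.edgeSet → ℤ)
    (hKrow : ∀ e, ∃ y : V → ℤ, (incMat G head tail).transpose.mulVec y = K e)
    (hKe : ∀ e, K e e.val = 1)
    (hKsupp : ∀ e (e' : G.edgeSet), e' ∈ T → e' ≠ e.val → K e e' = 0)
    (v₀ : V) :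
    let Dq : Matrix V G.edgeSet (LaurentPolynomial ℤ) := fun v e =>
      if e ∈ T then ((incMat G head tail v e : ℤ) : LaurentPolynomial ℤ)
      else LaurentPolynomial.T 1 * ((incMat G head tail v e : ℤ) : LaurentPolynomial ℤ)
    let D₀ : Matrix {v : V // v ≠ v₀} G.edgeSet (LaurentPolynomial ℤ) :=
      fun v e => Dq v.val e
    let Q₀ : Matrix {v : V // v ≠ v₀} {v : V // v ≠ v₀} (LaurentPolynomial ℤ) :=
      D₀ * D₀.transpose
    ∃ P : Matrix {v : V // v ≠ v₀} {e : G.edgeSet // e ∈ T} ℤ,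
      qCutGram G T K =
        (P.map (Int.cast : ℤ → LaurentPolynomial ℤ)).transpose * Q₀ *
          P.map (Int.cast : ℤ → LaurentPolynomial ℤ) ∧
      ∀ idx : {e : G.edgeSet // e ∈ T} ≃ {v : V // v ≠ v₀},
        (Matrix.of fun e e' : {e : G.edgeSet // e ∈ T} => P (idx e) e').det = 1 ∨
        (Matrix.of fun e e' : {e : G.edgeSet // e ∈ T} => P (idx e) e').det = -1 := by
  intro Dq D₀ Q₀
  set A := incMat G head tail with hA
  -- column sums of incidence matrix vanish
  have hht : ∀ f : G.edgeSet, head f ≠ tail f := by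
    intro f h
    have hf := f.2
    rw [hor f, h] at hf
    exact G.irrefl (G.mem_edgeSet.mp hf)
  have hcolsum : ∀ f : G.edgeSet, ∑ v, A v f = 0 := by
    intro f
    have h1 : ∀ v, A v f = (if v = head f then (1:ℤ) else 0) + (if v = tail f then -1 else 0) := by
      intro v
      by_cases h1 : v = head f
      · by_cases h2 : v = tail f
        · exact absurd (h1.symm.trans h2) (hht f)
        · simp [hA, incMat, h1, h2, hht f]
      · by_cases h2 : v = tail f
        · simp [hA, incMat, h1, h2, Ne.symm (hht f)]
        · simp [hA, incMat, h1, h2]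
    simp only [h1]
    rw [Finset.sum_add_distrib, Finset.sum_ite_eq' Finset.univ (head f) (fun _ => (1:ℤ)),
      Finset.sum_ite_eq' Finset.univ (tail f) (fun _ => (-1:ℤ))]
    simp
  -- choose potentials, normalize
  choose y hy using hKrow
  set z : {e : G.edgeSet // e ∈ T} → V → ℤ := fun e v => y e v - y e v₀ with hzdef
  have hz0 : ∀ e, z e v₀ = 0 := fun e => sub_self _
  have hz : ∀ e f, ∑ v, A v f * z e v = K e f := by
    intro e f
    have h1 := congrFun (hy e) f
    simp only [Matrix.mulVec, Matrix.transpose_apply, dotProduct] at h1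
    calc ∑ v, A v f * z e v
        = ∑ v, (A v f * y e v - A v f * y e v₀) := by
          simp only [hzdef, mul_sub]
      _ = (∑ v, A v f * y e v) - (∑ v, A v f) * y e v₀ := by
          rw [Finset.sum_sub_distrib, Finset.sum_mul]
      _ = K e f := by rw [hcolsum f, h1]; ring
  refine ⟨fun v e => z e v.val, ?_, ?_⟩
  · -- Gram identity
    set P : Matrix {v : V // v ≠ v₀} {e : G.edgeSet // e ∈ T} ℤ := fun v e => z e v.val with hP
    set Pc := P.map (Int.cast : ℤ → LaurentPolynomial ℤ) with hPc
    have hD₀ : ∀ (v : {v : V // v ≠ v₀}) f, D₀ v f =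
        (if f ∈ T then ((A v.val f : ℤ) : LaurentPolynomial ℤ)
          else LaurentPolynomial.T 1 * ((A v.val f : ℤ) : LaurentPolynomial ℤ)) := fun v f => rfl
    have hU : ∀ f e, (D₀.transpose * Pc) f e =
        (if f ∈ T then (1:LaurentPolynomial ℤ) else LaurentPolynomial.T 1) * ((K e f : ℤ) : LaurentPolynomial ℤ) := by
      intro f e
      rw [Matrix.mul_apply]
      simp only [Matrix.transpose_apply, hPc, Matrix.map_apply, hD₀]
      have : ∀ v : {v : V // v ≠ v₀},
          (if f ∈ T then ((A v.val f : ℤ) : LaurentPolynomial ℤ)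
            else LaurentPolynomial.T 1 * ((A v.val f : ℤ) : LaurentPolynomial ℤ)) * ((P v e : ℤ) : LaurentPolynomial ℤ)
          = (if f ∈ T then (1:LaurentPolynomial ℤ) else LaurentPolynomial.T 1) *
              ((A v.val f * z e v.val : ℤ) : LaurentPolynomial ℤ) := by
        intro v
        split_ifs <;> push_cast <;> simp only [hP] <;> ring
      simp only [this]
      rw [← Finset.mul_sum]
      congr 1
      have := sum_subtype_ne_aux v₀
        (fun v => ((A v f * z e v : ℤ) : LaurentPolynomial ℤ)) (by simp [hz0])
      rw [this]
      rw [← Int.cast_sum, hz]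
    have hfact : Pc.transpose * Q₀ * Pc = (D₀.transpose * Pc).transpose * (D₀.transpose * Pc) := by
      show Pc.transpose * (D₀ * D₀.transpose) * Pc = _
      rw [Matrix.transpose_mul, Matrix.transpose_transpose]
      simp only [Matrix.mul_assoc]
    rw [hfact]
    funext e e'
    rw [Matrix.mul_apply]
    simp only [Matrix.transpose_apply, hU]
    have hT2 : (LaurentPolynomial.T 1 : LaurentPolynomial ℤ) * LaurentPolynomial.T 1 = LaurentPolynomial.T 2 := by
      rw [← LaurentPolynomial.T_add]; norm_num
    have hTint : ∀ f, f ∈ T → K e f * K e' f = if f = e.val ∧ e = e' then 1 else 0 := by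
      intro f hf
      by_cases h1 : f = e.val
      · by_cases h2 : f = e'.val
        · have hee : e = e' := Subtype.ext (h1.symm.trans h2)
          subst hee
          subst h1
          simp [hKe e]
        · have hee : ¬ (e = e') := by
            intro h; exact h2 (h ▸ h1)
          rw [hKsupp e' f hf h2]
          simp [hee]
      · rw [hKsupp e f hf h1]
        simp [h1]
    have key : ∀ f, (if f ∈ T then (1:LaurentPolynomial ℤ) else LaurentPolynomial.T 1) * ((K e f : ℤ) : LaurentPolynomial ℤ) *
        ((if f ∈ T then (1:LaurentPolynomial ℤ) else LaurentPolynomial.T 1) * ((K e' f : ℤ) : LaurentPolynomial ℤ))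
        = ((K e f * K e' f : ℤ) : LaurentPolynomial ℤ) * LaurentPolynomial.T 2 +
          (if f = e.val ∧ e = e' then 1 - LaurentPolynomial.T 2 else 0) := by
      intro f
      by_cases hf : f ∈ T
      · rw [if_pos hf]
        have hcast : (1:LaurentPolynomial ℤ) * ((K e f : ℤ) : LaurentPolynomial ℤ) *
            (1 * ((K e' f : ℤ) : LaurentPolynomial ℤ)) = ((K e f * K e' f : ℤ) : LaurentPolynomial ℤ) := by
          push_cast; ring
        rw [hcast, hTint f hf]
        by_cases hc : f = e.val ∧ e = e'
        · rw [if_pos hc, if_pos hc]; push_cast; ring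
        · rw [if_neg hc, if_neg hc]; push_cast; ring
      · rw [if_neg hf]
        have hc : ¬ (f = e.val ∧ e = e') := by
          rintro ⟨h, -⟩; exact hf (h ▸ e.2)
        rw [if_neg hc]
        push_cast
        calc LaurentPolynomial.T 1 * (K e f : LaurentPolynomial ℤ) * (LaurentPolynomial.T 1 * (K e' f : LaurentPolynomial ℤ))
            = (LaurentPolynomial.T 1 * LaurentPolynomial.T 1) * ((K e f : LaurentPolynomial ℤ) * (K e' f : LaurentPolynomial ℤ)) := by ring
          _ = _ := by rw [hT2]; ring
    simp only [key]
    rw [Finset.sum_add_distrib, ← Finset.sum_mul, ← Int.cast_sum]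
    have hdelta : (∑ f, if f = e.val ∧ e = e' then (1:LaurentPolynomial ℤ) - LaurentPolynomial.T 2 else 0)
        = if e = e' then 1 - LaurentPolynomial.T 2 else 0 := by
      by_cases hee : e = e'
      · simp only [hee, and_true]
        rw [Finset.sum_ite_eq' Finset.univ (e'.val : G.edgeSet) (fun _ => (1:LaurentPolynomial ℤ) - LaurentPolynomial.T 2)]
        simp
      · simp [hee]
    rw [hdelta]
    simp only [qCutGram]
    by_cases hee : e = e'
    · subst hee
      rw [if_pos rfl, if_pos rfl]
      push_cast
      ring
    · rw [if_neg hee, if_neg hee]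
      push_cast
      ring
  · -- determinant
    intro idx
    set N : Matrix {e : G.edgeSet // e ∈ T} {e : G.edgeSet // e ∈ T} ℤ :=
      Matrix.of (fun e e' : {e : G.edgeSet // e ∈ T} => z e' (idx e).val) with hN
    set M : Matrix {e : G.edgeSet // e ∈ T} {e : G.edgeSet // e ∈ T} ℤ :=
      Matrix.of (fun f g : {e : G.edgeSet // e ∈ T} => A (idx g).val f.val) with hM
    have hAP : ∀ (f e : {e : G.edgeSet // e ∈ T}),
        (∑ v : {v : V // v ≠ v₀}, A v.val f.val * z e v.val) = if f = e then 1 else 0 := by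
      intro f e
      rw [sum_subtype_ne_aux v₀ (fun v => A v f.val * z e v) (by simp [hz0]), hz]
      by_cases h : f = e
      · subst h; rw [hKe]; simp
      · rw [hKsupp e f.val f.2 (fun hh => h (Subtype.ext hh))]; simp [h]
    have hMN : M * N = 1 := by
      ext f e'
      rw [Matrix.mul_apply]
      have : (∑ g, M f g * N g e') = ∑ v : {v : V // v ≠ v₀}, A v.val f.val * z e' v.val := by
        rw [← Equiv.sum_comp idx (fun v => A v.val f.val * z e' v.val)]
        rfl
      rw [this, hAP f e', Matrix.one_apply]
    have hdet : M.det * N.det = 1 := by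
      rw [← Matrix.det_mul, hMN, Matrix.det_one]
    have : IsUnit N.det := IsUnit.of_mul_eq_one M.det (by rw [mul_comm]; exact hdet)
    exact Int.isUnit_iff.mp this
end
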